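/- Let {a, b} be a 2-element generating set of a finite abelian group G, and let k and ℓ′ be integers such that 0 ≤ k, ℓ′ < |G| and |k − ℓ′| ≤ 1. Then there exist two arc-disjoint spanning quasi-paths P and P′ in Cay(G; a, b) such that δ_b(P) = k and δ_a(P′) = ℓ′. -/

import Mathlib

/-- A spanning quasi-path of `Cay(G; a, b)` with terminal vertex `τ`: an injective map
`f : G ∖ {τ} → G` with every step by `a` or by `b`. -/
def IsQuasiPath {G : Type*} [AddCommGroup G] (a b : G) (τ : G)
    (f : {x : G // x ≠ τ} → G) : Prop :=
  Function.Injective f ∧ ∀ x, f x - (x : G) ∈ ({a, b} : Set G)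

/-- `δ_s` of a quasi-path: the number of vertices that travel by `s`. -/
noncomputable def qDelta {G : Type*} [AddCommGroup G] (τ : G) (f : {x : G // x ≠ τ} → G) (s : G) : ℕ :=
  Nat.card {x : {x : G // x ≠ τ} // f x = (x : G) + s}

/-- The arc set of a quasi-path. -/
def qArcSet {G : Type*} (τ : G) (f : {x : G // x ≠ τ} → G) : Set (G × G) :=
  {p | ∃ x : {x : G // x ≠ τ}, p = ((x : G), f x)}

section Aux

variable {G : Type*} [AddCommGroup G]

open Classical in
/-- Step by `s₂` on `S`, by `s₁` off `S`. -/
noncomputable def stepF (S : Set G) (s₁ s₂ τ : G) : {x : G // x ≠ τ} → G :=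
  fun x => if (x : G) ∈ S then (x : G) + s₂ else (x : G) + s₁

lemma shift_eq {x y s₁ s₂ : G} (h : x + s₂ = y + s₁) : y = x + (s₂ - s₁) := by
  have h2 : (x + (s₂ - s₁)) + s₁ = y + s₁ := by rw [add_assoc, sub_add_cancel]; exact h
  exact (add_right_cancel h2).symm

lemma stepF_isQuasiPath (S : Set G) (a b s₁ s₂ τ : G)
    (hs1 : s₁ ∈ ({a, b} : Set G)) (hs2 : s₂ ∈ ({a, b} : Set G)) (h12 : s₁ ≠ s₂) (hτ : τ ∉ S)
    (hcl : ∀ x ∈ S, x + (s₂ - s₁) ∈ S ∨ x + (s₂ - s₁) = τ) :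
    IsQuasiPath a b τ (stepF S s₁ s₂ τ) := by
  constructor
  · rintro ⟨x, hx⟩ ⟨y, hy⟩ h
    simp only [stepF] at h
    apply Subtype.ext
    show x = y
    split_ifs at h with h1 h2 h2
    · exact add_right_cancel h
    · exfalso
      have hy' : y = x + (s₂ - s₁) := shift_eq h
      rcases hcl x h1 with h3 | h3
      · exact h2 (hy' ▸ h3)
      · exact hy (hy'.trans h3)
    · exfalso
      have hx' : x = y + (s₂ - s₁) := shift_eq h.symm
      rcases hcl y h2 with h3 | h3
      · exact h1 (hx' ▸ h3)
      · exact hx (hx'.trans h3)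
    · exact add_right_cancel h
  · intro x
    simp only [stepF]
    split_ifs
    · simpa using hs2
    · simpa using hs1

lemma stepF_qDelta (S : Set G) (s₁ s₂ τ : G) (h12 : s₁ ≠ s₂) (hτ : τ ∉ S) :
    qDelta τ (stepF S s₁ s₂ τ) s₂ = S.ncard := by
  have key : ∀ x : {x : G // x ≠ τ}, stepF S s₁ s₂ τ x = (x : G) + s₂ ↔ (x : G) ∈ S := by
    intro x
    simp only [stepF]
    split_ifs with h
    · simpa using h
    · constructor
      · intro he
        exact absurd (add_left_cancel he) h12
      · intro hx
        exact absurd hx h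
  rw [qDelta, ← Nat.card_coe_set_eq]
  exact Nat.card_congr
    { toFun := fun x => ⟨(x.1 : G), (key x.1).mp x.2⟩
      invFun := fun s => ⟨⟨s.1, fun h => hτ (h ▸ s.2)⟩, (key _).mpr s.2⟩
      left_inv := fun x => by apply Subtype.ext; apply Subtype.ext; rfl
      right_inv := fun s => by apply Subtype.ext; rfl }

lemma stepF_disjoint (S S' : Set G) (τ τ' a b : G) (hab : a ≠ b)
    (hSS : ∀ x : G, x ≠ τ → x ≠ τ' → (x ∈ S ↔ x ∈ S')) :
    Disjoint (qArcSet τ (stepF S a b τ)) (qArcSet τ' (stepF S' b a τ')) := by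
  rw [Set.disjoint_left]
  rintro p ⟨x, rfl⟩ ⟨y, hy⟩
  have hxy : (x : G) = (y : G) := congrArg Prod.fst hy
  have hfe : stepF S a b τ x = stepF S' b a τ' y := congrArg Prod.snd hy
  have hyτ' : (x : G) ≠ τ' := by rw [hxy]; exact y.2
  simp only [stepF] at hfe
  rw [← hxy] at hfe
  have hiff := hSS x x.2 hyτ'
  split_ifs at hfe with h1 h2 h2
  · exact hab (add_left_cancel hfe).symm
  · exact h2 (hiff.mp h1)
  · exact h1 (hiff.mpr h2)
  · exact hab (add_left_cancel hfe)

end Aux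

/-- If `{a, b}` generates the finite abelian group `G`, and `0 ≤ k, ℓ' < |G|` with
`|k − ℓ'| ≤ 1`, then there are two arc-disjoint spanning quasi-paths `P`, `P'` in
`Cay(G; a, b)` with `δ_b(P) = k` and `δ_a(P') = ℓ'`. -/
theorem arc_disjoint_quasi_paths {G : Type*} [AddCommGroup G] [Fintype G] (a b : G)
    (hab : a ≠ b) (hgen : AddSubgroup.closure {a, b} = ⊤) (k l' : ℕ)
    (hk : k < Fintype.card G) (hl' : l' < Fintype.card G)
    (hkl : |(k : ℤ) - (l' : ℤ)| ≤ 1) :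
    ∃ (τ : G) (f : {x : G // x ≠ τ} → G) (τ' : G) (f' : {x : G // x ≠ τ'} → G),
      IsQuasiPath a b τ f ∧ IsQuasiPath a b τ' f' ∧
      Disjoint (qArcSet τ f) (qArcSet τ' f') ∧
      qDelta τ f b = k ∧ qDelta τ' f' a = l' := by
  classical
  set d := b - a with hd_def
  have hd : d ≠ 0 := sub_ne_zero.mpr (Ne.symm hab)
  set m := addOrderOf d with hm_def
  have hm : 0 < m := addOrderOf_pos d
  have hmd : m • d = 0 := addOrderOf_nsmul_eq_zero d
  have hinj : ∀ i, i < m → ∀ i', i' < m → i • d = i' • d → i = i' := by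
    have key : ∀ i i', i' ≤ i → i < m → i • d = i' • d → i = i' := by
      intro i i' hle hi h
      have hsub : (i - i') • d = 0 := by
        rw [sub_nsmul d hle, h]
        simp
      have hdvd := addOrderOf_dvd_of_nsmul_eq_zero hsub
      rw [← hm_def] at hdvd
      have := Nat.eq_zero_of_dvd_of_lt hdvd (by omega)
      omega
    intro i hi i' hi' h
    rcases le_total i' i with hle | hle
    · exact key i i' hle hi h
    · exact (key i' i hle hi' h.symm).symm
  set H := AddSubgroup.zmultiples d with hH_def
  have hdH : d ∈ H := AddSubgroup.mem_zmultiples d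
  have hcardH : Nat.card H = m := Nat.card_zmultiples d
  haveI : Fintype (G ⧸ H) := Fintype.ofFinite _
  have hπd' : ∀ x : G, ((x - d : G) : G ⧸ H) = (x : G ⧸ H) := by
    intro x
    rw [QuotientAddGroup.eq_iff_sub_mem]
    simpa using H.neg_mem hdH
  have hπd : ∀ x : G, ((x + d : G) : G ⧸ H) = (x : G ⧸ H) := by
    intro x
    rw [QuotientAddGroup.eq_iff_sub_mem]
    simpa using hdH
  have hcardQ : Fintype.card G = Nat.card (G ⧸ H) * m := by
    rw [← hcardH, ← Nat.card_eq_fintype_card]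
    exact AddSubgroup.card_eq_card_quotient_mul_card_addSubgroup H
  set t := k / m with ht_def
  set j := k % m with hj_def
  have hj : j < m := Nat.mod_lt _ hm
  have hk_eq : t * m + j = k := by rw [mul_comm]; exact Nat.div_add_mod k m
  have htQ : t + 1 ≤ Nat.card (G ⧸ H) := by
    rcases Nat.lt_or_ge t (Nat.card (G ⧸ H)) with h | h
    · omega
    · exfalso
      have := Nat.mul_le_mul_right m h
      omega
  obtain ⟨T, hTsub, hTcard⟩ :=
    Finset.exists_subset_card_eq (s := (Finset.univ.erase (0 : G ⧸ H))) (n := t)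
      (by
        rw [Finset.card_erase_of_mem (Finset.mem_univ _), Finset.card_univ,
          ← Nat.card_eq_fintype_card]
        omega)
  have hT0 : (0 : G ⧸ H) ∉ T := fun h => (Finset.mem_erase.mp (hTsub h)).1 rfl
  set Seg : Set G := (fun i : ℕ => -(i • d)) '' (Set.Icc 1 j) with hSeg_def
  set S : Set G := (QuotientAddGroup.mk ⁻¹' (↑T : Set (G ⧸ H))) ∪ Seg with hS_def
  have hSmem : ∀ x : G, x ∈ S ↔ ((x : G ⧸ H) ∈ T ∨ ∃ i, 1 ≤ i ∧ i ≤ j ∧ x = -(i • d)) := by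
    intro x
    rw [hS_def]
    simp only [Set.mem_union, Set.mem_preimage, Finset.mem_coe, hSeg_def,
      Set.mem_image, Set.mem_Icc]
    constructor
    · rintro (h | ⟨i, ⟨h1, h2⟩, rfl⟩)
      · exact Or.inl h
      · exact Or.inr ⟨i, h1, h2, rfl⟩
    · rintro (h | ⟨i, h1, h2, rfl⟩)
      · exact Or.inl h
      · exact Or.inr ⟨i, ⟨h1, h2⟩, rfl⟩
  have hsub1 : ∀ i : ℕ, -(i • d) - d = -((i + 1) • d) := by
    intro i
    rw [succ_nsmul]
    abel
  have hadd1 : ∀ i : ℕ, 1 ≤ i → -(i • d) + d = -((i - 1) • d) := by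
    intro i hi
    have h1 : i • d = (i - 1) • d + d := by
      conv_lhs => rw [show i = (i - 1) + 1 by omega]
      rw [succ_nsmul]
    rw [h1]
    abel
  have hid_ne : ∀ i : ℕ, 1 ≤ i → i ≤ j → -(i • d) ≠ 0 := by
    intro i h1 h2 h
    have h3 : i • d = 0 • d := by
      rw [zero_smul]
      exact neg_eq_zero.mp h
    have := hinj i (lt_of_le_of_lt h2 hj) 0 hm h3
    omega
  have hπSeg : ∀ i : ℕ, ((-(i • d) : G) : G ⧸ H) = 0 :=
    fun i => (QuotientAddGroup.eq_zero_iff _).mpr (H.neg_mem (AddSubgroup.nsmul_mem H hdH i))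
  have h0S : (0 : G) ∉ S := by
    rw [hSmem]
    rintro (h | ⟨i, h1, h2, h0⟩)
    · exact hT0 h
    · exact hid_ne i h1 h2 h0.symm
  have hclS : ∀ x ∈ S, x + d ∈ S ∨ x + d = 0 := by
    intro x hx
    rw [hSmem] at hx
    rcases hx with h | ⟨i, h1, h2, rfl⟩
    · left; rw [hSmem]; left; rw [hπd]; exact h
    · rcases eq_or_lt_of_le h1 with h1' | h1'
      · right
        rw [← h1', one_nsmul]
        abel
      · left
        rw [hSmem]
        right
        exact ⟨i - 1, by omega, by omega, hadd1 i h1⟩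
  have hclS' : ∀ x ∈ S, x - d ∈ S ∨ x - d = -((j + 1) • d) := by
    intro x hx
    rw [hSmem] at hx
    rcases hx with h | ⟨i, h1, h2, rfl⟩
    · left; rw [hSmem]; left; rw [hπd']; exact h
    · rcases eq_or_lt_of_le h2 with h2' | h2'
      · right
        rw [h2', hsub1]
      · left
        rw [hSmem]
        right
        exact ⟨i + 1, by omega, by omega, hsub1 i⟩
  have hSegInj : Set.InjOn (fun i : ℕ => -(i • d)) (Set.Icc 1 j) := by
    intro i hi i' hi' h
    simp only [Set.mem_Icc] at hi hi'
    have h2 : i • d = i' • d := neg_injective h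
    exact hinj i (lt_of_le_of_lt hi.2 hj) i' (lt_of_le_of_lt hi'.2 hj) h2
  have hSegcard : Seg.ncard = j := by
    rw [hSeg_def, Set.ncard_image_of_injOn hSegInj, ← Finset.coe_Icc,
      Set.ncard_coe_finset, Nat.card_Icc]
    omega
  have hTprecard : (QuotientAddGroup.mk ⁻¹' (↑T : Set (G ⧸ H)) : Set G).ncard = t * m := by
    rw [← Nat.card_coe_set_eq,
      Nat.card_congr (QuotientAddGroup.preimageMkEquivAddSubgroupProdSet H ↑T),
      Nat.card_prod, hcardH, Nat.card_coe_set_eq, Set.ncard_coe_finset, hTcard, mul_comm]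
  have hdisjTS : Disjoint (QuotientAddGroup.mk ⁻¹' (↑T : Set (G ⧸ H)) : Set G) Seg := by
    rw [Set.disjoint_left]
    rintro x hx ⟨i, hi, rfl⟩
    rw [Set.mem_preimage, Finset.mem_coe, hπSeg i] at hx
    exact hT0 hx
  have hScard : S.ncard = k := by
    rw [hS_def, Set.ncard_union_eq hdisjTS (Set.toFinite _) (Set.toFinite _),
      hTprecard, hSegcard, hk_eq]
  have hexists_out : ∀ S'' : Set G, S''.ncard < Fintype.card G → ∃ y, y ∉ S'' := by
    intro S'' hcard
    by_contra h
    push_neg at h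
    have : S'' = Set.univ := Set.eq_univ_of_forall h
    rw [this, Set.ncard_univ, Nat.card_eq_fintype_card] at hcard
    omega
  have assemble : ∀ (S'' : Set G) (τ' : G), τ' ∉ S'' → S''.ncard = l' →
      (∀ x ∈ S'', x - d ∈ S'' ∨ x - d = τ') →
      (∀ x : G, x ≠ 0 → x ≠ τ' → (x ∈ S ↔ x ∈ S'')) →
      ∃ (τ : G) (f : {x : G // x ≠ τ} → G) (τ' : G) (f' : {x : G // x ≠ τ'} → G),
        IsQuasiPath a b τ f ∧ IsQuasiPath a b τ' f' ∧
        Disjoint (qArcSet τ f) (qArcSet τ' f') ∧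
        qDelta τ f b = k ∧ qDelta τ' f' a = l' := by
    intro S'' τ' hτ' hcard hcl hiff
    refine ⟨0, stepF S a b 0, τ', stepF S'' b a τ', ?_, ?_, ?_, ?_, ?_⟩
    · apply stepF_isQuasiPath S a b a b 0 (by simp) (by simp) hab h0S
      intro x hx
      rw [← hd_def]
      exact hclS x hx
    · apply stepF_isQuasiPath S'' a b b a τ' (by simp) (by simp) (Ne.symm hab) hτ'
      intro x hx
      have heq : x + (a - b) = x - d := by rw [hd_def]; abel
      rw [heq]
      exact hcl x hx
    · exact stepF_disjoint S S'' 0 τ' a b hab hiff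
    · rw [stepF_qDelta S a b 0 hab h0S, hScard]
    · rw [stepF_qDelta S'' b a τ' (Ne.symm hab) hτ', hcard]
  have hcases : l' = k ∨ l' = k + 1 ∨ k = l' + 1 := by
    have := abs_le.mp hkl
    omega
  rcases hcases with hE | hE | hE
  · -- l' = k : take S'' = S
    by_cases hin : -((j + 1) • d) ∈ S
    · obtain ⟨τ', hτ'⟩ := hexists_out S (by rw [hScard]; exact hk)
      apply assemble S τ' hτ' (by rw [hE]; exact hScard) ?_ (fun x _ _ => Iff.rfl)
      intro x hx
      rcases hclS' x hx with h | h
      · exact Or.inl h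
      · exact Or.inl (h ▸ hin)
    · apply assemble S _ hin (by rw [hE]; exact hScard) hclS' (fun x _ _ => Iff.rfl)
  · -- l' = k + 1 : take S'' = insert 0 S
    set S2 : Set G := insert 0 S with hS2_def
    have hS2card : S2.ncard = k + 1 := by
      rw [hS2_def, Set.ncard_insert_of_notMem h0S (Set.toFinite _), hScard]
    have hclS2 : ∀ x ∈ S2, x - d ∈ S2 ∨ x - d = -((j + 1) • d) := by
      intro x hx
      rcases Set.mem_insert_iff.mp hx with rfl | hx'
      · have h0d : (0 : G) - d = -((1 : ℕ) • d) := by rw [one_nsmul]; abel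
        rcases Nat.eq_zero_or_pos j with hj0 | hj1
        · right
          rw [h0d, hj0]
        · left
          rw [hS2_def]
          apply Set.mem_insert_of_mem
          rw [hSmem]
          exact Or.inr ⟨1, le_refl 1, hj1, h0d⟩
      · rcases hclS' x hx' with h | h
        · exact Or.inl (Set.mem_insert_of_mem _ h)
        · exact Or.inr h
    have hiff2 : ∀ x : G, x ≠ 0 → x ≠ -((j + 1) • d) → (x ∈ S ↔ x ∈ S2) → True := fun _ _ _ _ => trivial
    have hiffgen : ∀ (τ' : G) (x : G), x ≠ 0 → x ≠ τ' → (x ∈ S ↔ x ∈ S2) := by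
      intro τ' x hx0 _
      rw [hS2_def, Set.mem_insert_iff]
      constructor
      · exact Or.inr
      · rintro (rfl | h)
        · exact absurd rfl hx0
        · exact h
    by_cases hin : -((j + 1) • d) ∈ S2
    · obtain ⟨τ', hτ'⟩ := hexists_out S2 (by rw [hS2card]; omega)
      apply assemble S2 τ' hτ' (by rw [hE, hS2card]) ?_ (hiffgen τ')
      intro x hx
      rcases hclS2 x hx with h | h
      · exact Or.inl h
      · exact Or.inl (h ▸ hin)
    · exact assemble S2 _ hin (by rw [hE, hS2card]) hclS2 (hiffgen _)
  · -- k = l' + 1 : take S'' = S \ {τ'} for suitable τ' ∈ S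
    have hfind : ∃ τ' ∈ S, ∀ x ∈ S, x ≠ τ' → x - d ∈ S ∨ x - d = τ' := by
      rcases Nat.eq_zero_or_pos j with hj0 | hj1
      · obtain ⟨τ', hτ'⟩ := Set.nonempty_of_ncard_ne_zero (s := S) (by rw [hScard]; omega)
        refine ⟨τ', hτ', ?_⟩
        intro x hx hne
        rcases hclS' x hx with h | h
        · exact Or.inl h
        · exfalso
          rw [hj0, zero_add, one_nsmul] at h
          have hx0 : x = 0 := by
            have := sub_eq_iff_eq_add.mp h
            rw [this]
            abel
          exact h0S (hx0 ▸ hx)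
      · refine ⟨-(j • d), ?_, ?_⟩
        · rw [hSmem]
          exact Or.inr ⟨j, hj1, le_refl j, rfl⟩
        · intro x hx hne
          rcases hclS' x hx with h | h
          · exact Or.inl h
          · exfalso
            apply hne
            have hx' : x = -((j + 1) • d) + d := by rw [← h]; abel
            rw [hx', hadd1 (j + 1) (by omega)]
            simp
    obtain ⟨τ', hτ'S, hcl3⟩ := hfind
    apply assemble (S \ {τ'}) τ' (by simp) ?_ ?_ ?_
    · rw [Set.ncard_diff_singleton_of_mem hτ'S, hScard]
      omega
    · intro x hx
      rcases hcl3 x hx.1 (by simpa using hx.2) with h | h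
      · by_cases hh : x - d = τ'
        · exact Or.inr hh
        · exact Or.inl ⟨h, hh⟩
      · exact Or.inr h
    · intro x _ hxτ'
      simp [Set.mem_diff, hxτ']
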